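/- Let a, c < 0, μ > 0, and let (f,g) = (1/√2)(μ^{2/3} h_λ(μ^{1/3}·), -μ^{2/3} h_λ(μ^{1/3}·)) where h_λ(x) = λh(λ²x) for a fixed nonnegative h ∈ H¹(ℝ) with ‖h‖₂ = 1. Then ‖f‖₂² + ‖g‖₂² = μ and τ(f,g) ≤ μ^{5/3} λ (λ³(|a|+|c|)‖h'‖₂² - (1/(2√2))‖h‖₃³). -/

import Mathlib

open MeasureTheory Real

/-- With `f = (1/√2) μ^(2/3) h_λ(μ^(1/3)·)` and `g = -f`, where `h_λ(x) = λ h(λ²x)` for a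
nonnegative `h ∈ H¹(ℝ)` with `‖h‖₂ = 1`, one has `‖f‖₂² + ‖g‖₂² = μ` and
`τ(f,g) ≤ μ^(5/3) λ (λ³(|a|+|c|)‖h'‖₂² - (1/(2√2))‖h‖₃³)`. -/
theorem stmt5 (a c μ l : ℝ) (ha : a < 0) (hc : c < 0) (hμ : 0 < μ) (hl : 0 < l)
    (h h' : ℝ → ℝ)
    (hpos : ∀ x, 0 ≤ h x)
    (hderiv : ∀ x, HasDerivAt h (h' x) x)
    (hh2 : Integrable (fun x => (h x) ^ 2))
    (hh'2 : Integrable (fun x => (h' x) ^ 2))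
    (hh3 : Integrable (fun x => (h x) ^ 3))
    (hnorm : (∫ x, (h x) ^ 2) = 1)
    (f g f' g' : ℝ → ℝ)
    (hf : f = fun x => (1 / Real.sqrt 2) * μ ^ ((2 : ℝ) / 3) * (l * h (l ^ 2 * (μ ^ ((1 : ℝ) / 3) * x))))
    (hg : g = fun x => -f x)
    (hf' : f' = fun x => (1 / Real.sqrt 2) * μ ^ ((2 : ℝ) / 3) * μ ^ ((1 : ℝ) / 3) * (l ^ 3 * h' (l ^ 2 * (μ ^ ((1 : ℝ) / 3) * x))))
    (hg' : g' = fun x => -f' x) :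
    (∫ x, (f x) ^ 2) + (∫ x, (g x) ^ 2) = μ ∧
    -a * (∫ x, (f' x) ^ 2) - c * (∫ x, (g' x) ^ 2)
        + (∫ x, (f x) ^ 2 * g x) + 2 * (∫ x, f x * g x) ≤
      μ ^ ((5 : ℝ) / 3) * l *
        (l ^ 3 * (|a| + |c|) * (∫ x, (h' x) ^ 2)
          - (1 / (2 * Real.sqrt 2)) * (∫ x, (h x) ^ 3)) := by
  have hsqrt2 : (0:ℝ) < Real.sqrt 2 := Real.sqrt_pos.mpr (by norm_num)
  have h2 : Real.sqrt 2 ^ 2 = 2 := Real.sq_sqrt (by norm_num)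
  have h3s : Real.sqrt 2 ^ 3 = 2 * Real.sqrt 2 := by
    rw [pow_succ, h2]
  set u := μ ^ ((1:ℝ)/3) with hu_def
  have hu : 0 < u := Real.rpow_pos_of_pos hμ _
  have hu3 : u ^ 3 = μ := by
    rw [hu_def, ← Real.rpow_natCast (μ ^ ((1:ℝ)/3)) 3, ← Real.rpow_mul hμ.le]
    norm_num
  have hu2 : μ ^ ((2:ℝ)/3) = u ^ 2 := by
    rw [hu_def, ← Real.rpow_natCast (μ ^ ((1:ℝ)/3)) 2, ← Real.rpow_mul hμ.le]
    norm_num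
  have hu5 : μ ^ ((5:ℝ)/3) = u ^ 5 := by
    rw [hu_def, ← Real.rpow_natCast (μ ^ ((1:ℝ)/3)) 5, ← Real.rpow_mul hμ.le]
    norm_num
  have key : ∀ F : ℝ → ℝ, (∫ x, F (l ^ 2 * (u * x))) = (l ^ 2 * u)⁻¹ * ∫ x, F x := by
    intro F
    have hk := MeasureTheory.Measure.integral_comp_mul_left F (l ^ 2 * u)
    simp only [mul_assoc] at hk ⊢
    rw [hk, abs_of_pos (by positivity), smul_eq_mul]
  have If2 : (∫ x, f x ^ 2) = μ / 2 := by
    have e : (∫ x, f x ^ 2)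
        = (1 / Real.sqrt 2 * u ^ 2 * l) ^ 2 * ∫ x, (fun y => h y ^ 2) (l ^ 2 * (u * x)) := by
      rw [← MeasureTheory.integral_const_mul]
      congr 1; ext x; rw [hf]; simp only [hu2]; ring
    rw [e, key (fun y => h y ^ 2), hnorm, mul_one, ← hu3]
    have c2 : (1 / Real.sqrt 2 * u ^ 2 * l) ^ 2 = 1 / 2 * (u ^ 4 * l ^ 2) := by
      rw [mul_pow, mul_pow, div_pow, one_pow, h2]; ring
    rw [c2]
    field_simp
  have Ig2 : (∫ x, g x ^ 2) = μ / 2 := by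
    rw [← If2]; congr 1; ext x; rw [hg]; ring
  have If'2 : (∫ x, f' x ^ 2) = 1 / 2 * (u ^ 5 * l ^ 4) * ∫ x, h' x ^ 2 := by
    have e : (∫ x, f' x ^ 2)
        = (1 / Real.sqrt 2 * u ^ 2 * u * l ^ 3) ^ 2 * ∫ x, (fun y => h' y ^ 2) (l ^ 2 * (u * x)) := by
      rw [← MeasureTheory.integral_const_mul]
      congr 1; ext x; rw [hf']; simp only [hu2]; ring
    rw [e, key (fun y => h' y ^ 2)]
    have c2 : (1 / Real.sqrt 2 * u ^ 2 * u * l ^ 3) ^ 2 = 1 / 2 * (u ^ 6 * l ^ 6) := by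
      rw [mul_pow, mul_pow, mul_pow, div_pow, one_pow, h2]; ring
    rw [c2]
    field_simp
  have Ig'2 : (∫ x, g' x ^ 2) = 1 / 2 * (u ^ 5 * l ^ 4) * ∫ x, h' x ^ 2 := by
    rw [← If'2]; congr 1; ext x; rw [hg']; ring
  have If2g : (∫ x, f x ^ 2 * g x)
      = -(1 / (2 * Real.sqrt 2) * (u ^ 5 * l) * ∫ x, h x ^ 3) := by
    have e : (∫ x, f x ^ 2 * g x)
        = (-(1 / Real.sqrt 2 * u ^ 2 * l) ^ 3) * ∫ x, (fun y => h y ^ 3) (l ^ 2 * (u * x)) := by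
      rw [← MeasureTheory.integral_const_mul]
      congr 1; ext x; rw [hg, hf]; simp only [hu2]; ring
    rw [e, key (fun y => h y ^ 3)]
    have c3 : (1 / Real.sqrt 2 * u ^ 2 * l) ^ 3 = 1 / (2 * Real.sqrt 2) * (u ^ 6 * l ^ 3) := by
      rw [mul_pow, mul_pow, div_pow, one_pow, h3s]; ring
    rw [c3]
    field_simp
  have Ifg : (∫ x, f x * g x) = -(μ / 2) := by
    rw [← If2, ← MeasureTheory.integral_neg]
    congr 1; ext x; rw [hg]; ring
  have hIh' : 0 ≤ ∫ x, h' x ^ 2 := integral_nonneg fun x => sq_nonneg _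
  constructor
  · rw [If2, Ig2]; ring
  · rw [If'2, Ig'2, If2g, Ifg, hu5, abs_of_neg ha, abs_of_neg hc]
    have hP : 0 ≤ (-a - c) * (u ^ 5 * l ^ 4 * ∫ x, h' x ^ 2) :=
      mul_nonneg (by linarith) (mul_nonneg (by positivity) hIh')
    nlinarith [hμ, hP]
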